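/- Homological perturbation lemma (operator form). Let R be a commutative ring, L and M R-modules, b_L an R-linear endomorphism of L with b_L ∘ b_L = 0, and b, h R-linear endomorphisms of M with b ∘ b = 0. Let p : M → L and ι : L → M be R-linear maps satisfying p ∘ b = b_L ∘ p, b ∘ ι = ι ∘ b_L, p ∘ ι = id_L, and ι ∘ p = id_M + b ∘ h + h ∘ b. Let μ be an R-linear endomorphism of M such that (b + μ) ∘ (b + μ) = 0 and μ ∘ h is nilpotent, and suppose moreover that p ∘ h = 0 and p ∘ μ = 0. Since μ ∘ h is nilpotent, id_M − μ ∘ h is invertible; set A = (id_M − μ ∘ h)⁻¹ ∘ μ, ι_∞ = ι + h ∘ A ∘ ι, and h_∞ = h + h ∘ A ∘ h. Then: (i) p ∘ (b + μ) = b_L ∘ p; (ii) (b + μ) ∘ ι_∞ = ι_∞ ∘ b_L; (iii) p ∘ ι_∞ = id_L; (iv) ι_∞ ∘ p = id_M + (b + μ) ∘ h_∞ + h_∞ ∘ (b + μ). -/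
import Mathlib

private lemma nilpotent_swap {S : Type*} [Ring S] {x y : S} (hx : IsNilpotent (x * y)) :
    IsNilpotent (y * x) := by
  obtain ⟨n, hn⟩ := hx
  refine ⟨n + 1, ?_⟩
  have key : ∀ k : ℕ, (y * x) ^ (k + 1) = y * (x * y) ^ k * x := by
    intro k
    induction k with
    | zero => simp [pow_succ]
    | succ m ih =>
        rw [pow_succ, ih, pow_succ]
        noncomm_ring
  rw [key n, hn, mul_zero, zero_mul]

/-- **Homological perturbation lemma (operator form).**
Given a deformation retract datum `(p, ι, h)` between `(L, bL)` and `(M, b)` and a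
small perturbation `μ` of `b` with `p ∘ h = 0` and `p ∘ μ = 0`, setting
`A = (1 - μh)⁻¹ μ`, `ι∞ = ι + h A ι` and `h∞ = h + h A h`, we obtain a deformation
retract datum `(p, ι∞, h∞)` between `(L, bL)` and `(M, b + μ)`. -/
theorem homological_perturbation_lemma
    {R L M : Type*} [CommRing R] [AddCommGroup L] [AddCommGroup M]
    [Module R L] [Module R M]
    (bL : Module.End R L) (hbL : bL * bL = 0)
    (b h μ : Module.End R M) (hb : b * b = 0)
    (p : M →ₗ[R] L) (ι : L →ₗ[R] M)
    (hpb : p ∘ₗ b = bL ∘ₗ p)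
    (hbι : b ∘ₗ ι = ι ∘ₗ bL)
    (hpι : p ∘ₗ ι = (LinearMap.id : L →ₗ[R] L))
    (hιp : (ι ∘ₗ p : Module.End R M) = 1 + b * h + h * b)
    (hsq : (b + μ) * (b + μ) = 0)
    (hnil : IsNilpotent (μ * h))
    (hph : p ∘ₗ h = 0) (hpμ : p ∘ₗ μ = 0)
    (A : Module.End R M) (hA : A = Ring.inverse (1 - μ * h) * μ)
    (ιinf : L →ₗ[R] M) (hιinf : ιinf = ι + (h * A) ∘ₗ ι)
    (hinf : Module.End R M) (hhinf : hinf = h + h * A * h) :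
    p ∘ₗ (b + μ) = bL ∘ₗ p ∧
    (b + μ) ∘ₗ ιinf = ιinf ∘ₗ bL ∧
    p ∘ₗ ιinf = (LinearMap.id : L →ₗ[R] L) ∧
    (ιinf ∘ₗ p : Module.End R M) = 1 + (b + μ) * hinf + hinf * (b + μ) := by
  set u : Module.End R M := 1 - μ * h with hu
  set v : Module.End R M := 1 - h * μ with hv
  set w : Module.End R M := Ring.inverse v with hw
  have hunit_u : IsUnit u := hnil.isUnit_one_sub
  have hunit_v : IsUnit v := (nilpotent_swap hnil).isUnit_one_sub
  have hwv : w * v = 1 := Ring.inverse_mul_cancel v hunit_v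
  have hvw : v * w = 1 := Ring.mul_inverse_cancel v hunit_v
  -- h * Ring.inverse u = w * h
  have hhu : h * u = v * h := by rw [hu, hv]; noncomm_ring
  have hhw : h * Ring.inverse u = w * h := by
    have : w * (h * u) * Ring.inverse u = w * (v * h) * Ring.inverse u := by rw [hhu]
    calc h * Ring.inverse u = (w * v) * h * Ring.inverse u := by rw [hwv, one_mul]
      _ = w * (v * h) * Ring.inverse u := by noncomm_ring
      _ = w * (h * u) * Ring.inverse u := by rw [hhu]
      _ = w * h * (u * Ring.inverse u) := by noncomm_ring
      _ = w * h := by rw [Ring.mul_inverse_cancel u hunit_u, mul_one]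
  -- h * A = w - 1
  have hhA : h * A = w - 1 := by
    have : h * A = w * h * μ := by rw [hA, ← mul_assoc, hhw]
    rw [this]
    have : w * h * μ = w * (1 - v) := by rw [hv]; noncomm_ring
    rw [this, mul_sub, mul_one, hwv]
  -- μ² = -(b*μ + μ*b)
  have hμμ : μ * μ = -(b * μ + μ * b) := by
    have h2 : b * b + ((b * μ + μ * b) + μ * μ) = 0 := by rw [← hsq]; noncomm_ring
    rw [hb, zero_add] at h2
    exact eq_neg_of_add_eq_zero_right h2
  -- ι ∘ p ∘ μ = 0, giving μ + b*h*μ + h*b*μ = 0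
  have hkey0 : μ + b * h * μ + h * b * μ = 0 := by
    have e1 : (ι ∘ₗ p : Module.End R M) * μ = (1 + b * h + h * b) * μ := by rw [hιp]
    have e2 : (ι ∘ₗ p : Module.End R M) * μ = 0 := by
      rw [Module.End.mul_eq_comp, LinearMap.comp_assoc, hpμ, LinearMap.comp_zero]
    rw [e2] at e1
    rw [← e1.symm]
    noncomm_ring
  -- the key intertwining identity: v * (b + μ) = b * v
  have hkeyv : v * (b + μ) = b * v := by
    have z : μ * μ + (b * μ + μ * b) = 0 := by rw [hμμ]; abel
    have expand : v * (b + μ) =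
        b * v + (μ + b * h * μ + h * b * μ) - h * (μ * μ + (b * μ + μ * b)) := by
      rw [hv]; noncomm_ring
    rw [expand, z, hkey0, mul_zero, sub_zero, add_zero]
  have hDw : (b + μ) * w = w * b := by
    calc (b + μ) * w = (w * v) * (b + μ) * w := by rw [hwv, one_mul]
      _ = w * (v * (b + μ)) * w := by noncomm_ring
      _ = w * (b * v) * w := by rw [hkeyv]
      _ = w * b * (v * w) := by noncomm_ring
      _ = w * b := by rw [hvw, mul_one]
  -- ιinf = w ∘ₗ ι, hinf = w * h
  have hιinf' : ιinf = w ∘ₗ ι := by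
    rw [hιinf, hhA]
    ext x; simp [sub_smul]
  have hhinf' : hinf = w * h := by
    rw [hhinf, hhA]; noncomm_ring
  -- p ∘ w = p
  have hpv : p ∘ₗ v = p := by
    rw [hv]
    have : p ∘ₗ ((1 : Module.End R M) - h * μ) = p - (p ∘ₗ h) ∘ₗ μ := by
      ext x; simp [Module.End.mul_eq_comp]
    rw [this, hph, LinearMap.zero_comp, sub_zero]
  have hpw : p ∘ₗ w = p := by
    calc p ∘ₗ w = (p ∘ₗ v) ∘ₗ w := by rw [hpv]
      _ = p ∘ₗ (v * w) := by rw [LinearMap.comp_assoc]; rfl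
      _ = p := by rw [hvw]; ext x; simp
  refine ⟨?_, ?_, ?_, ?_⟩
  · -- (i)
    have : p ∘ₗ (b + μ) = p ∘ₗ b + p ∘ₗ μ := by ext x; simp
    rw [this, hpμ, add_zero, hpb]
  · -- (ii)
    rw [hιinf']
    calc (b + μ) ∘ₗ (w ∘ₗ ι) = ((b + μ) * w) ∘ₗ ι := by
          rw [Module.End.mul_eq_comp, LinearMap.comp_assoc]
      _ = (w * b) ∘ₗ ι := by rw [hDw]
      _ = w ∘ₗ (b ∘ₗ ι) := by rw [Module.End.mul_eq_comp, LinearMap.comp_assoc]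
      _ = w ∘ₗ (ι ∘ₗ bL) := by rw [hbι]
      _ = (w ∘ₗ ι) ∘ₗ bL := by rw [LinearMap.comp_assoc]
  · -- (iii)
    rw [hιinf', ← LinearMap.comp_assoc, hpw, hpι]
  · -- (iv)
    rw [hιinf', hhinf']
    have hl : ((w ∘ₗ ι) ∘ₗ p : Module.End R M) = w * (ι ∘ₗ p : Module.End R M) := by
      rw [Module.End.mul_eq_comp, LinearMap.comp_assoc]
    rw [hl, hιp]
    have hr : (b + μ) * (w * h) = w * b * h := by rw [← mul_assoc, hDw]
    rw [hr]
    calc w * (1 + b * h + h * b)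
        = w * (v + b * h + h * b + h * μ) := by
          congr 1; rw [hv]; noncomm_ring
      _ = w * v + w * b * h + w * h * b + w * h * μ := by noncomm_ring
      _ = 1 + w * b * h + w * h * (b + μ) := by rw [hwv]; noncomm_ring
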